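/- Let R be a rewrite system over F and t ∈ T(F, X). If there exists a simplification ordering ≻ such that l ≻ r for every rule l→r ∈ U(t), then for every ground substitution α with Var(t) ⊆ Dom(α) mapping every abstraction variable occurring in t to an R-normal form, every innermost rewrite chain starting from αt is finite (αt innermost terminates). -/

import Mathlib

namespace TRS

inductive Term (F V : Type*) where
  | var : V → Term F V
  | app : F → List (Term F V) → Term F V

namespace Term

variable {F V : Type*}

mutual
  def subst (σ : V → Term F V) : Term F V → Term F V
    | .var x => σ x
    | .app f ts => .app f (substList σ ts)

  def substList (σ : V → Term F V) : List (Term F V) → List (Term F V)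
    | [] => []
    | t :: ts => subst σ t :: substList σ ts
end

mutual
  def vars : Term F V → Set V
    | .var x => {x}
    | .app _ ts => varsList ts

  def varsList : List (Term F V) → Set V
    | [] => ∅
    | t :: ts => vars t ∪ varsList ts
end

def IsGround (t : Term F V) : Prop := vars t = ∅

def top : Term F V → Option F
  | .var _ => none
  | .app f _ => some f

def subtermAt : List ℕ → Term F V → Option (Term F V)
  | [], t => some t
  | _ :: _, .var _ => none
  | i :: p, .app _ ts =>
    match ts[i]? with
    | none => none
    | some u => subtermAt p u

def replaceAt : List ℕ → Term F V → Term F V → Option (Term F V)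
  | [], _, u => some u
  | _ :: _, .var _, _ => none
  | i :: p, .app f ts, u =>
    match ts[i]? with
    | none => none
    | some ti =>
      match replaceAt p ti u with
      | none => none
      | some ti' => some (.app f (ts.set i ti'))

inductive WF (arity : F → ℕ) : Term F V → Prop
  | var (x : V) : WF arity (.var x)
  | app (f : F) (ts : List (Term F V)) :
      ts.length = arity f → (∀ t ∈ ts, WF arity t) → WF arity (.app f ts)

inductive Occurs (f : F) : Term F V → Prop
  | head (ts : List (Term F V)) : Occurs f (.app f ts)
  | arg {g : F} {ts : List (Term F V)} {t : Term F V} :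
      t ∈ ts → Occurs f t → Occurs f (.app g ts)

end Term

open Term

structure Rule (F V : Type*) where
  lhs : Term F V
  rhs : Term F V

variable {F V : Type*}

/-- The domain of a substitution. -/
def SDom (σ : V → Term F V) : Set V := {x | σ x ≠ Term.var x}

/-- The range (variables) of a substitution. -/
def SRan (σ : V → Term F V) : Set V := ⋃ x ∈ SDom σ, vars (σ x)

/-- A ground substitution maps every variable of its domain to a ground term. -/
def GroundSubst (σ : V → Term F V) : Prop := ∀ x ∈ SDom σ, IsGround (σ x)

/-- `R` is a rewrite system: no left-hand side is a variable, and
`Var(rhs) ⊆ Var(lhs)` for every rule. -/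
def IsRS (R : List (Rule F V)) : Prop :=
  ∀ ρ ∈ R, (∀ x : V, ρ.lhs ≠ Term.var x) ∧ vars ρ.rhs ⊆ vars ρ.lhs

/-- Rewriting at position `p` with the rule `l → r`. -/
def RewriteAtWith (l r : Term F V) (p : List ℕ) (s t : Term F V) : Prop :=
  ∃ τ : V → Term F V, subtermAt p s = some (subst τ l) ∧ replaceAt p s (subst τ r) = some t

/-- Rewriting at position `p` with some rule of `R`. -/
def RewriteAt (R : List (Rule F V)) (p : List ℕ) (s t : Term F V) : Prop :=
  ∃ ρ ∈ R, RewriteAtWith ρ.lhs ρ.rhs p s t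

/-- The rewriting relation induced by `R`. -/
def Rewrite (R : List (Rule F V)) (s t : Term F V) : Prop :=
  ∃ p, RewriteAt R p s t

def ReducibleAt (R : List (Rule F V)) (s : Term F V) (p : List ℕ) : Prop :=
  ∃ t, RewriteAt R p s t

def Reducible (R : List (Rule F V)) (s : Term F V) : Prop :=
  ∃ t, Rewrite R s t

def NormalForm (R : List (Rule F V)) (s : Term F V) : Prop := ¬ Reducible R s

/-- `n` is a normal form of `s`. -/
def IsNormalFormOf (R : List (Rule F V)) (s n : Term F V) : Prop :=
  Relation.ReflTransGen (Rewrite R) s n ∧ NormalForm R n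

/-- `q` is strictly below `p` (`p` is a strict prefix of `q`). -/
def StrictBelow (p q : List ℕ) : Prop := p <+: q ∧ p ≠ q

/-- Innermost rewrite step at position `p`. -/
def InnAt (R : List (Rule F V)) (p : List ℕ) (s t : Term F V) : Prop :=
  RewriteAt R p s t ∧ ∀ q, StrictBelow p q → ¬ ReducibleAt R s q

def InnStep (R : List (Rule F V)) (s t : Term F V) : Prop := ∃ p, InnAt R p s t

/-- Outermost rewrite step at position `p`. -/
def OutAt (R : List (Rule F V)) (p : List ℕ) (s t : Term F V) : Prop :=
  RewriteAt R p s t ∧ ∀ q, StrictBelow q p → ¬ ReducibleAt R s q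

def OutStep (R : List (Rule F V)) (s t : Term F V) : Prop := ∃ p, OutAt R p s t

/-- Innermost rewrite step at position `p` with rule `l → r`. -/
def InnAtWith (R : List (Rule F V)) (l r : Term F V) (p : List ℕ) (s t : Term F V) : Prop :=
  RewriteAtWith l r p s t ∧ ∀ q, StrictBelow p q → ¬ ReducibleAt R s q

/-- Outermost rewrite step at position `p` with rule `l → r`. -/
def OutAtWith (R : List (Rule F V)) (l r : Term F V) (p : List ℕ) (s t : Term F V) : Prop :=
  RewriteAtWith l r p s t ∧ ∀ q, StrictBelow q p → ¬ ReducibleAt R s q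

/-- No infinite innermost derivation starts from `t`. -/
def InnTerminates (R : List (Rule F V)) (t : Term F V) : Prop :=
  ¬ ∃ f : ℕ → Term F V, f 0 = t ∧ ∀ n, InnStep R (f n) (f (n + 1))

/-- No infinite outermost derivation starts from `t`. -/
def OutTerminates (R : List (Rule F V)) (t : Term F V) : Prop :=
  ¬ ∃ f : ℕ → Term F V, f 0 = t ∧ ∀ n, OutStep R (f n) (f (n + 1))

def Unifies (σ : V → Term F V) (u v : Term F V) : Prop := subst σ u = subst σ v

/-- `σ` is a most general unifier of `u` and `v`. -/
def IsMGU (u v : Term F V) (σ : V → Term F V) : Prop :=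
  Unifies σ u v ∧
    ∀ τ : V → Term F V, Unifies τ u v → ∃ ρ : V → Term F V, ∀ x, subst ρ (σ x) = τ x

/-- The usable rules of a term (least set closed under the defining equations). -/
inductive Usable (R : List (Rule F V)) (XA : Set V) : Term F V → Rule F V → Prop
  | var {x : V} {ρ : Rule F V} : x ∉ XA → ρ ∈ R → Usable R XA (Term.var x) ρ
  | rls {f : F} {ts : List (Term F V)} {ρ : Rule F V} :
      ρ ∈ R → Term.top ρ.lhs = some f → Usable R XA (Term.app f ts) ρ
  | arg {f : F} {ts : List (Term F V)} {t : Term F V} {ρ : Rule F V} :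
      t ∈ ts → Usable R XA t ρ → Usable R XA (Term.app f ts) ρ
  | rhs {f : F} {ts : List (Term F V)} {ρ' ρ : Rule F V} :
      ρ' ∈ R → Term.top ρ'.lhs = some f → Usable R XA ρ'.rhs ρ → Usable R XA (Term.app f ts) ρ

/- ===================== Auxiliary development ===================== -/

section Aux

variable (arity : F → ℕ)

/-- Structural induction principle for `Term` (nested inductive). -/
theorem term_ind {P : Term F V → Prop} (hv : ∀ x, P (.var x))
    (ha : ∀ f ts, (∀ t ∈ ts, P t) → P (.app f ts)) : ∀ t, P t := by
  have key : ∀ n (t : Term F V), sizeOf t ≤ n → P t := by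
    intro n
    induction n with
    | zero => intro t h; cases t <;> simp at h
    | succ n ih =>
      intro t h
      cases t with
      | var x => exact hv x
      | app f ts =>
        refine ha f ts fun u hu => ih u ?_
        have := List.sizeOf_lt_of_mem hu
        simp only [Term.app.sizeOf_spec] at h
        omega
  exact fun t => key (sizeOf t) t le_rfl

theorem sizeOf_lt_of_mem {f : F} {ts : List (Term F V)} {t : Term F V} (h : t ∈ ts) :
    sizeOf t < sizeOf (Term.app f ts) := by
  have := List.sizeOf_lt_of_mem h
  simp only [Term.app.sizeOf_spec]
  omega

theorem substList_eq_map (σ : V → Term F V) (ts : List (Term F V)) :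
    substList σ ts = ts.map (subst σ) := by
  induction ts with
  | nil => rfl
  | cons t ts ih => simp [substList, ih]

theorem mem_varsList {x : V} {ts : List (Term F V)} :
    x ∈ varsList ts ↔ ∃ t ∈ ts, x ∈ vars t := by
  induction ts with
  | nil => simp [varsList]
  | cons t ts ih =>
    simp only [varsList, Set.mem_union, ih, List.mem_cons]
    constructor
    · rintro (h | ⟨u, hu, hx⟩)
      · exact ⟨t, Or.inl rfl, h⟩
      · exact ⟨u, Or.inr hu, hx⟩
    · rintro ⟨u, (rfl | hu), hx⟩
      · exact Or.inl hx
      · exact Or.inr ⟨u, hu, hx⟩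

theorem subst_congr {σ σ' : V → Term F V} :
    ∀ (u : Term F V), (∀ x ∈ vars u, σ x = σ' x) → subst σ u = subst σ' u := by
  refine term_ind (fun x h => ?_) (fun f ts ih h => ?_)
  · exact h x (by simp [vars])
  · simp only [subst, substList_eq_map]
    congr 1
    exact List.map_congr_left fun u hu =>
      ih u hu fun x hx => h x (by simp only [vars]; exact mem_varsList.2 ⟨u, hu, hx⟩)

theorem isGround_subst {σ : V → Term F V} :
    ∀ (u : Term F V), (∀ x ∈ vars u, IsGround (σ x)) → IsGround (subst σ u) := by
  refine term_ind (fun x h => ?_) (fun f ts ih h => ?_)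
  · exact h x (by simp [vars])
  · simp only [subst, IsGround, vars, substList_eq_map]
    rw [Set.eq_empty_iff_forall_notMem]
    intro x hx
    obtain ⟨u, hu, hxu⟩ := mem_varsList.1 hx
    simp only [List.mem_map] at hu
    obtain ⟨w, hw, rfl⟩ := hu
    have := ih w hw fun y hy => h y (by simp only [vars]; exact mem_varsList.2 ⟨w, hw, hy⟩)
    rw [IsGround, Set.eq_empty_iff_forall_notMem] at this
    exact this x hxu

theorem wf_subst {σ : V → Term F V} :
    ∀ (u : Term F V), WF arity u → (∀ x ∈ vars u, WF arity (σ x)) →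
      WF arity (subst σ u) := by
  refine term_ind (fun x _ h => ?_) (fun f ts ih hwf h => ?_)
  · exact h x (by simp [vars])
  · cases hwf with
    | app _ _ hlen hall =>
      simp only [subst, substList_eq_map]
      refine WF.app f _ (by simpa using hlen) ?_
      intro u hu
      simp only [List.mem_map] at hu
      obtain ⟨w, hw, rfl⟩ := hu
      exact ih w hw (hall w hw) fun x hx =>
        h x (by simp only [vars]; exact mem_varsList.2 ⟨w, hw, hx⟩)

end Aux

section Pos

variable {arity : F → ℕ} {R : List (Rule F V)}

/-- Variable-free terms, structurally. -/
inductive Gr : Term F V → Prop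
  | app {f : F} {ts : List (Term F V)} : (∀ t ∈ ts, Gr t) → Gr (.app f ts)

theorem gr_of_isGround : ∀ {t : Term F V}, IsGround t → Gr t := by
  intro t
  induction t using term_ind with
  | hv x => intro h; exact absurd h (by simp [IsGround, vars])
  | ha f ts ih =>
    intro h
    refine Gr.app fun u hu => ih u hu ?_
    rw [IsGround, Set.eq_empty_iff_forall_notMem] at h ⊢
    intro x hx
    exact h x (by simp only [vars]; exact mem_varsList.2 ⟨u, hu, hx⟩)

theorem mem_of_getElem? {ts : List (Term F V)} {i : ℕ} {u : Term F V}
    (h : ts[i]? = some u) : u ∈ ts := by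
  obtain ⟨hi, rfl⟩ := List.getElem?_eq_some_iff.1 h
  exact List.getElem_mem hi

theorem subtermAt_gr : ∀ (q : List ℕ) (s u : Term F V),
    subtermAt q s = some u → Gr s → Gr u := by
  intro q
  induction q with
  | nil => intro s u h hg; cases h; exact hg
  | cons i q ih =>
    intro s u h hg
    cases s with
    | var x => simp [subtermAt] at h
    | app f ts =>
      simp only [subtermAt] at h
      cases hts : ts[i]? with
      | none => rw [hts] at h; simp at h
      | some si =>
        rw [hts] at h
        cases hg with
        | app hall => exact ih si u h (hall si (mem_of_getElem? hts))

theorem subtermAt_wf : ∀ (q : List ℕ) (s u : Term F V),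
    subtermAt q s = some u → WF arity s → WF arity u := by
  intro q
  induction q with
  | nil => intro s u h hg; cases h; exact hg
  | cons i q ih =>
    intro s u h hg
    cases s with
    | var x => simp [subtermAt] at h
    | app f ts =>
      simp only [subtermAt] at h
      cases hts : ts[i]? with
      | none => rw [hts] at h; simp at h
      | some si =>
        rw [hts] at h
        cases hg with
        | app _ _ _ hall => exact ih si u h (hall si (mem_of_getElem? hts))

theorem subtermAt_subst (σ : V → Term F V) : ∀ (q : List ℕ) (u w : Term F V),
    subtermAt q u = some w → subtermAt q (subst σ u) = some (subst σ w) := by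
  intro q
  induction q with
  | nil => intro u w h; cases h; rfl
  | cons i q ih =>
    intro u w h
    cases u with
    | var x => simp [subtermAt] at h
    | app f ts =>
      simp only [subtermAt] at h
      cases hts : ts[i]? with
      | none => rw [hts] at h; simp at h
      | some si =>
        rw [hts] at h
        simp only [subst, subtermAt, substList_eq_map, List.getElem?_map, hts, Option.map_some]
        exact ih si w h

theorem exists_pos_var : ∀ (u : Term F V) (x : V), x ∈ vars u →
    ∃ q, subtermAt q u = some (.var x) := by
  refine term_ind (fun y x hx => ?_) (fun f ts ih x hx => ?_)
  · simp only [vars, Set.mem_singleton_iff] at hx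
    subst hx; exact ⟨[], rfl⟩
  · simp only [vars] at hx
    obtain ⟨u, hu, hxu⟩ := mem_varsList.1 hx
    obtain ⟨q, hq⟩ := ih u hu x hxu
    obtain ⟨i, hi, rfl⟩ := List.mem_iff_getElem.1 hu
    refine ⟨i :: q, ?_⟩
    simp only [subtermAt, List.getElem?_eq_getElem hi]
    exact hq

theorem subtermAt_cons_eq {i : ℕ} {p : List ℕ} {f : F} {ts : List (Term F V)} :
    subtermAt (i :: p) (.app f ts : Term F V) = ts[i]?.bind (subtermAt p) := by
  cases hts : ts[i]? <;> simp [subtermAt, hts]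

theorem replaceAt_cons_eq {i : ℕ} {p : List ℕ} {f : F} {ts : List (Term F V)}
    {u : Term F V} :
    replaceAt (i :: p) (.app f ts : Term F V) u =
      ts[i]?.bind (fun ti => (replaceAt p ti u).map (fun ti' => .app f (ts.set i ti'))) := by
  cases hts : ts[i]? with
  | none => simp [replaceAt, hts]
  | some ti => cases hrep : replaceAt p ti u <;> simp [replaceAt, hts, hrep]

theorem rewriteAtWith_cons_iff {l r : Term F V} {i : ℕ} {p : List ℕ} {f : F}
    {ts : List (Term F V)} {t : Term F V} :
    RewriteAtWith l r (i :: p) (.app f ts) t ↔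
      ∃ si ti, ts[i]? = some si ∧ RewriteAtWith l r p si ti ∧ t = .app f (ts.set i ti) := by
  constructor
  · rintro ⟨τ, h1, h2⟩
    rw [subtermAt_cons_eq] at h1
    rw [replaceAt_cons_eq] at h2
    obtain ⟨si, hts, h1⟩ := Option.bind_eq_some_iff.1 h1
    obtain ⟨si', hts', h2⟩ := Option.bind_eq_some_iff.1 h2
    rw [hts] at hts'
    cases hts'
    obtain ⟨ti, hrep, hti⟩ := Option.map_eq_some_iff.1 h2
    exact ⟨si, ti, hts, ⟨τ, h1, hrep⟩, hti.symm⟩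
  · rintro ⟨si, ti, hts, ⟨τ, h1, h2⟩, rfl⟩
    refine ⟨τ, ?_, ?_⟩
    · rw [subtermAt_cons_eq, hts]; exact h1
    · rw [replaceAt_cons_eq, hts]; simp [h2]

theorem rewriteAt_cons_iff {i : ℕ} {p : List ℕ} {f : F} {ts : List (Term F V)}
    {t : Term F V} :
    RewriteAt R (i :: p) (.app f ts) t ↔
      ∃ si ti, ts[i]? = some si ∧ RewriteAt R p si ti ∧ t = .app f (ts.set i ti) := by
  constructor
  · rintro ⟨ρ, hρ, hw⟩
    obtain ⟨si, ti, hts, hw', rfl⟩ := rewriteAtWith_cons_iff.1 hw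
    exact ⟨si, ti, hts, ⟨ρ, hρ, hw'⟩, rfl⟩
  · rintro ⟨si, ti, hts, ⟨ρ, hρ, hw⟩, rfl⟩
    exact ⟨ρ, hρ, rewriteAtWith_cons_iff.2 ⟨si, ti, hts, hw, rfl⟩⟩

theorem rewriteAt_lift : ∀ (q : List ℕ) (s u : Term F V) (p : List ℕ) (t' : Term F V),
    subtermAt q s = some u → RewriteAt R p u t' → ∃ t, RewriteAt R (q ++ p) s t := by
  intro q
  induction q with
  | nil => intro s u p t' h hr; cases h; exact ⟨t', hr⟩
  | cons i q ih =>
    intro s u p t' h hr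
    cases s with
    | var x => simp [subtermAt] at h
    | app f ts =>
      simp only [subtermAt] at h
      cases hts : ts[i]? with
      | none => rw [hts] at h; simp at h
      | some si =>
        rw [hts] at h
        obtain ⟨t1, ht1⟩ := ih si u p t' h hr
        exact ⟨.app f (ts.set i t1), rewriteAt_cons_iff.2 ⟨si, t1, hts, ht1, rfl⟩⟩

theorem strictBelow_nil {q : List ℕ} : StrictBelow [] q ↔ q ≠ [] := by
  constructor
  · rintro ⟨_, h⟩; exact fun hq => h hq.symm
  · intro h; exact ⟨List.nil_prefix, fun hq => h hq.symm⟩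

/-- All proper subterms of the redex position are normal. -/
theorem normal_of_innermost_nil {s : Term F V}
    (hin : ∀ q, StrictBelow [] q → ¬ ReducibleAt R s q) :
    ∀ q u, q ≠ [] → subtermAt q s = some u → NormalForm R u := by
  intro q u hq hsub hred
  obtain ⟨t', p', hr⟩ := hred
  obtain ⟨t, ht⟩ := rewriteAt_lift q s u p' t' hsub hr
  exact hin (q ++ p') (strictBelow_nil.2 (by simp [hq])) ⟨t, ht⟩

theorem innermost_cons {i : ℕ} {p : List ℕ} {f : F} {ts : List (Term F V)} {si : Term F V}
    (hts : ts[i]? = some si)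
    (hin : ∀ q, StrictBelow (i :: p) q → ¬ ReducibleAt R (.app f ts) q) :
    ∀ q, StrictBelow p q → ¬ ReducibleAt R si q := by
  rintro q ⟨hpre, hne⟩ ⟨t', ht'⟩
  refine hin (i :: q) ⟨List.cons_prefix_cons.2 ⟨rfl, hpre⟩, fun h => hne (by injection h)⟩
    ⟨.app f (ts.set i t'), rewriteAt_cons_iff.2 ⟨si, t', hts, ht', rfl⟩⟩

end Pos

section GoodSec

variable {R : List (Rule F V)} {XA : Set V} {t0 : Term F V}

theorem usable_mem {u : Term F V} {ρ : Rule F V} (h : Usable R XA u ρ) : ρ ∈ R := by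
  induction h with
  | var _ hρ => exact hρ
  | rls hρ _ => exact hρ
  | arg _ _ ih => exact ih
  | rhs _ _ _ ih => exact ih

theorem usable_trans {ρ : Rule F V} (h : Usable R XA t0 ρ) :
    ∀ ρ', Usable R XA ρ.rhs ρ' → Usable R XA t0 ρ' := by
  induction h with
  | var hx _ => exact fun ρ' h' => Usable.var hx (usable_mem h')
  | rls hρ htop => exact fun ρ' h' => Usable.rhs hρ htop h'
  | arg hmem _ ih => exact fun ρ' h' => Usable.arg hmem (ih ρ' h')
  | rhs hρ' htop _ ih => exact fun ρ' h' => Usable.rhs hρ' htop (ih ρ' h')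

theorem usable_var_all {x : V} (hx : x ∉ XA) :
    ∀ (u : Term F V), x ∈ vars u → ∀ ρ ∈ R, Usable R XA u ρ := by
  refine term_ind (fun y hy ρ hρ => ?_) (fun f ts ih hy ρ hρ => ?_)
  · simp only [vars, Set.mem_singleton_iff] at hy
    subst hy; exact Usable.var hx hρ
  · simp only [vars] at hy
    obtain ⟨u, hu, hxu⟩ := mem_varsList.1 hy
    exact Usable.arg hu (ih u hu hxu ρ hρ)

/-- The invariant preserved by innermost rewriting: every "active" node's rules are
usable rules of `t0`, down to normal-form subterms. -/
inductive Good (R : List (Rule F V)) (XA : Set V) (t0 : Term F V) : Term F V → Prop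
  | nf {s : Term F V} : NormalForm R s → Good R XA t0 s
  | app {f : F} {ts : List (Term F V)} :
      (∀ ρ ∈ R, Term.top ρ.lhs = some f → Usable R XA t0 ρ) →
      (∀ u ∈ ts, Good R XA t0 u) → Good R XA t0 (.app f ts)

theorem normalForm_var (hRS : IsRS R) (x : V) : NormalForm R (.var x : Term F V) := by
  rintro ⟨t, p, ρ, hρ, τ, h1, h2⟩
  cases p with
  | nil =>
    simp only [subtermAt, Option.some.injEq] at h1
    cases hl : ρ.lhs with
    | var y => exact (hRS ρ hρ).1 y hl
    | app f ls => rw [hl] at h1; simp [subst] at h1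
  | cons i p => simp [subtermAt] at h1

theorem good_all (hRS : IsRS R) (hall : ∀ ρ ∈ R, Usable R XA t0 ρ) :
    ∀ s : Term F V, Good R XA t0 s := by
  refine term_ind (fun x => Good.nf (normalForm_var hRS x)) (fun f ts ih => ?_)
  exact Good.app (fun ρ hρ _ => hall ρ hρ) ih

theorem good_subst {σ : V → Term F V} :
    ∀ (u : Term F V), (∀ ρ, Usable R XA u ρ → Usable R XA t0 ρ) →
      (∀ x ∈ vars u, NormalForm R (σ x)) → Good R XA t0 (subst σ u) := by
  refine term_ind (fun x hlift hnfσ => ?_) (fun f ts ih hlift hnfσ => ?_)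
  · exact Good.nf (hnfσ x (by simp [vars]))
  · simp only [subst, substList_eq_map]
    refine Good.app (fun ρ hρ htop => hlift ρ (Usable.rls hρ htop)) ?_
    intro u hu
    simp only [List.mem_map] at hu
    obtain ⟨w, hw, rfl⟩ := hu
    exact ih w hw (fun ρ h => hlift ρ (Usable.arg hw h))
      (fun x hx => hnfσ x (by simp only [vars]; exact mem_varsList.2 ⟨w, hw, hx⟩))

theorem good_init (hRS : IsRS R) {α : V → Term F V}
    (hnf : ∀ x ∈ vars t0, x ∈ XA → NormalForm R (α x)) :
    ∀ (u : Term F V), vars u ⊆ vars t0 →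
      (∀ ρ, Usable R XA u ρ → Usable R XA t0 ρ) → Good R XA t0 (subst α u) := by
  refine term_ind (fun x hsub hlift => ?_) (fun f ts ih hsub hlift => ?_)
  · have hxt : x ∈ vars t0 := hsub (by simp [vars])
    by_cases hx : x ∈ XA
    · exact Good.nf (hnf x hxt hx)
    · exact good_all hRS
        (fun ρ hρ => hlift ρ (usable_var_all hx (.var x) (by simp [vars]) ρ hρ)) _
  · simp only [subst, substList_eq_map]
    refine Good.app (fun ρ hρ htop => hlift ρ (Usable.rls hρ htop)) ?_
    intro u hu
    simp only [List.mem_map] at hu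
    obtain ⟨w, hw, rfl⟩ := hu
    exact ih w hw
      (fun x hx => hsub (by simp only [vars]; exact mem_varsList.2 ⟨w, hw, hx⟩))
      (fun ρ h => hlift ρ (Usable.arg hw h))

end GoodSec

section StepSec

variable {arity : F → ℕ} {R : List (Rule F V)} {XA : Set V} {t0 : Term F V}
variable {succ : Term F V → Term F V → Prop}

theorem gr_subst {σ : V → Term F V} :
    ∀ (u : Term F V), (∀ x ∈ vars u, Gr (σ x)) → Gr (subst σ u) := by
  refine term_ind (fun x h => h x (by simp [vars])) (fun f ts ih h => ?_)
  simp only [subst, substList_eq_map]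
  refine Gr.app ?_
  intro u hu
  simp only [List.mem_map] at hu
  obtain ⟨w, hw, rfl⟩ := hu
  exact ih w hw fun x hx => h x (by simp only [vars]; exact mem_varsList.2 ⟨w, hw, hx⟩)

/-- Main lemma: an innermost step from a good ground well-formed term yields a good
ground well-formed term, uses a usable rule, and strictly decreases `succ`. -/
theorem step_main (hRS : IsRS R)
    (hRwf : ∀ ρ ∈ R, Term.WF arity ρ.lhs ∧ Term.WF arity ρ.rhs)
    (hstable : ∀ (f : F) (pre post : List (Term F V)) (a b : Term F V),
        Term.WF arity (Term.app f (pre ++ a :: post)) →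
        Term.WF arity (Term.app f (pre ++ b :: post)) →
        succ a b → succ (Term.app f (pre ++ a :: post)) (Term.app f (pre ++ b :: post)))
    (hsubst : ∀ (σ : V → Term F V) (a b : Term F V), Term.WF arity a → Term.WF arity b →
        (∀ x, Term.WF arity (σ x)) → succ a b → succ (subst σ a) (subst σ b))
    (horient : ∀ ρ : Rule F V, Usable R XA t0 ρ → succ ρ.lhs ρ.rhs) :
    ∀ (p : List ℕ) (s t : Term F V), Gr s → WF arity s → Good R XA t0 s →
      RewriteAt R p s t → (∀ q, StrictBelow p q → ¬ ReducibleAt R s q) →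
      (Gr t ∧ WF arity t ∧ Good R XA t0 t) ∧ succ s t := by
  intro p
  induction p with
  | nil =>
    intro s t hgr hwf hgood hr hin
    have hred : Reducible R s := ⟨t, [], hr⟩
    obtain ⟨ρ, hρ, τ, h1, h2⟩ := hr
    simp only [subtermAt, Option.some.injEq] at h1
    simp only [replaceAt, Option.some.injEq] at h2
    -- s = subst τ ρ.lhs, t = subst τ ρ.rhs
    subst h2
    -- the rule used is usable
    have husable : Usable R XA t0 ρ := by
      cases hl : ρ.lhs with
      | var y => exact absurd hl ((hRS ρ hρ).1 y)
      | app fl ls =>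
        cases hgood with
        | nf hnf => exact absurd hred hnf
        | app hhead hargs' =>
          rename_i f ts
          have hs : Term.app f ts = Term.app fl (substList τ ls) := by
            rw [h1, hl]; rfl
          have hf : f = fl := by injection hs
          exact hhead ρ hρ (by rw [hl, hf]; rfl)
    -- properties of the matching substitution on the variables of the lhs
    have hτ : ∀ x ∈ vars ρ.lhs, NormalForm R (τ x) ∧ Gr (τ x) ∧ WF arity (τ x) := by
      intro x hx
      obtain ⟨q, hq⟩ := exists_pos_var ρ.lhs x hx
      have hqne : q ≠ [] := by
        intro h
        subst h
        simp only [subtermAt, Option.some.injEq] at hq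
        exact (hRS ρ hρ).1 x hq
      have hsub : subtermAt q s = some (τ x) := by
        rw [h1]
        exact subtermAt_subst τ q ρ.lhs (.var x) hq
      exact ⟨normal_of_innermost_nil hin q _ hqne hsub,
        subtermAt_gr q s _ hsub hgr, subtermAt_wf q s _ hsub hwf⟩
    have hvr : vars ρ.rhs ⊆ vars ρ.lhs := (hRS ρ hρ).2
    refine ⟨⟨?_, ?_, ?_⟩, ?_⟩
    · exact gr_subst ρ.rhs fun x hx => (hτ x (hvr hx)).2.1
    · exact wf_subst arity ρ.rhs (hRwf ρ hρ).2 fun x hx => (hτ x (hvr hx)).2.2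
    · exact good_subst ρ.rhs (usable_trans husable) fun x hx => (hτ x (hvr hx)).1
    · -- the decrease
      classical
      set τ' : V → Term F V := fun x => if x ∈ vars ρ.lhs then τ x else .var x with hτ'
      have hl' : subst τ' ρ.lhs = subst τ ρ.lhs :=
        (subst_congr ρ.lhs fun x hx => by simp [hτ', if_pos hx]).symm
      have hr' : subst τ' ρ.rhs = subst τ ρ.rhs :=
        (subst_congr ρ.rhs fun x hx => by simp [hτ', if_pos (hvr hx)]).symm
      have := hsubst τ' ρ.lhs ρ.rhs (hRwf ρ hρ).1 (hRwf ρ hρ).2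
        (fun x => by
          by_cases hx : x ∈ vars ρ.lhs
          · simpa [hτ', if_pos hx] using (hτ x hx).2.2
          · simp only [hτ', if_neg hx]; exact WF.var x)
        (horient ρ husable)
      rw [hl', hr'] at this
      rw [h1]
      exact this
  | cons i p ih =>
    intro s t hgr hwf hgood hr hin
    cases s with
    | var x =>
      obtain ⟨ρ, hρ, τ, h1, h2⟩ := hr
      simp [subtermAt] at h1
    | app f ts =>
      obtain ⟨si, ti, hts, hr', rfl⟩ := rewriteAt_cons_iff.1 hr
      have hsi : si ∈ ts := mem_of_getElem? hts
      have hgsi : Gr si := by cases hgr with | app hall => exact hall si hsi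
      have hwsi : WF arity si := by cases hwf with | app _ _ _ hall => exact hall si hsi
      obtain ⟨hhead, hargs⟩ : (∀ ρ ∈ R, Term.top ρ.lhs = some f → Usable R XA t0 ρ) ∧
          (∀ u ∈ ts, Good R XA t0 u) := by
        cases hgood with
        | nf hnf => exact absurd ⟨_, i :: p, hr⟩ hnf
        | app hh ha => exact ⟨hh, ha⟩
      obtain ⟨⟨hgti, hwti, hgoodti⟩, hsucc⟩ :=
        ih si ti hgsi hwsi (hargs si hsi) hr' (innermost_cons hts hin)
      have hilen : i < ts.length := (List.getElem?_eq_some_iff.1 hts).1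
      have hgetsi : ts[i] = si := (List.getElem?_eq_some_iff.1 hts).2
      have hdec : ts = ts.take i ++ si :: ts.drop (i + 1) := by
        conv_lhs => rw [← List.take_append_drop i ts]
        rw [List.drop_eq_getElem_cons hilen, hgetsi]
      have hset : ts.set i ti = ts.take i ++ ti :: ts.drop (i + 1) := by
        rw [List.set_eq_take_cons_drop _ hilen]
      have hwt : WF arity (Term.app f (ts.set i ti)) := by
        cases hwf with
        | app _ _ hlen hall =>
          refine WF.app f _ (by simpa using hlen) ?_
          intro u hu
          rcases List.mem_or_eq_of_mem_set hu with h | rfl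
          · exact hall u h
          · exact hwti
      refine ⟨⟨?_, hwt, ?_⟩, ?_⟩
      · refine Gr.app ?_
        intro u hu
        rcases List.mem_or_eq_of_mem_set hu with h | rfl
        · cases hgr with | app hall => exact hall u h
        · exact hgti
      · refine Good.app hhead ?_
        intro u hu
        rcases List.mem_or_eq_of_mem_set hu with h | rfl
        · exact hargs u h
        · exact hgoodti
      · have := hstable f (ts.take i) (ts.drop (i + 1)) si ti
          (by rw [← hdec]; exact hwf) (by rw [← hset]; exact hwt) hsucc
        rw [← hdec, ← hset] at this
        exact this

end StepSec

section EmbSec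

variable {arity : F → ℕ}

mutual
/-- Homeomorphic embedding of terms (fixed-arity version). -/
inductive Emb : Term F V → Term F V → Prop
  | dive {s t : Term F V} {ts : List (Term F V)} {f : F} :
      t ∈ ts → Emb s t → Emb s (.app f ts)
  | node {f : F} {ss ts : List (Term F V)} : EmbL ss ts → Emb (.app f ss) (.app f ts)
/-- Pointwise embedding of lists of terms. -/
inductive EmbL : List (Term F V) → List (Term F V) → Prop
  | nil : EmbL [] []
  | cons {s t : Term F V} {ss ts : List (Term F V)} :
      Emb s t → EmbL ss ts → EmbL (s :: ss) (t :: ts)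
end

theorem embL_length : ∀ {ss ts : List (Term F V)}, EmbL ss ts → ss.length = ts.length := by
  intro ss
  induction ss with
  | nil => rintro ts h; cases h; rfl
  | cons s ss ih =>
    rintro ts h
    cases h with
    | cons h1 h2 => simp [ih h2]

theorem embL_get : ∀ {ss ts : List (Term F V)}, EmbL ss ts → ∀ s ∈ ss,
    ∃ t ∈ ts, Emb s t := by
  intro ss
  induction ss with
  | nil => intro ts h s hs; simp at hs
  | cons a ss ih =>
    intro ts h s hs
    cases h with
    | cons h1 h2 =>
      rcases List.mem_cons.1 hs with rfl | hs'
      · exact ⟨_, List.mem_cons_self, h1⟩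
      · obtain ⟨t, ht, hst⟩ := ih h2 s hs'
        exact ⟨t, List.mem_cons_of_mem _ ht, hst⟩

theorem embL_refl : ∀ (ts : List (Term F V)), (∀ t ∈ ts, Emb t t) → EmbL ts ts := by
  intro ts
  induction ts with
  | nil => intro; exact EmbL.nil
  | cons t ts ih =>
    intro h
    exact EmbL.cons (h t (List.mem_cons_self))
      (ih fun u hu => h u (List.mem_cons_of_mem _ hu))

theorem emb_refl : ∀ (t : Term F V), Gr t → Emb t t := by
  refine term_ind (fun x h => by cases h) (fun f ts ih h => ?_)
  cases h with
  | app hall => exact Emb.node (embL_refl ts fun u hu => ih u hu (hall u hu))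

theorem embL_trans_aux : ∀ (ts ss rs : List (Term F V)), EmbL rs ss → EmbL ss ts →
    (∀ t ∈ ts, ∀ a b : Term F V, Emb a b → Emb b t → Emb a t) → EmbL rs ts := by
  intro ts
  induction ts with
  | nil =>
    intro ss rs h1 h2 _
    cases h2; cases h1; exact EmbL.nil
  | cons t ts ih =>
    intro ss rs h1 h2 htr
    cases h2 with
    | cons hb hl2 =>
      cases h1 with
      | cons ha hl1 =>
        refine EmbL.cons (htr t (List.mem_cons_self) _ _ ha hb)
          (ih _ _ hl1 hl2 fun u hu => htr u (List.mem_cons_of_mem _ hu))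

theorem emb_trans : ∀ (n : ℕ) (a b c : Term F V), sizeOf c ≤ n →
    Emb a b → Emb b c → Emb a c := by
  intro n
  induction n with
  | zero => intro a b c h; cases c <;> simp at h
  | succ n ih =>
    intro a b c hsz hab hbc
    cases hbc with
    | dive ht hbt =>
      rename_i t ts f
      have : sizeOf t ≤ n := by
        have := sizeOf_lt_of_mem (f := f) ht
        omega
      exact Emb.dive ht (ih a b t this hab hbt)
    | node hL =>
      rename_i f ss' ts
      cases hab with
      | dive hs' has' =>
        obtain ⟨t, ht, hst⟩ := embL_get hL _ hs'
        have : sizeOf t ≤ n := by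
          have := sizeOf_lt_of_mem (f := f) ht
          omega
        exact Emb.dive ht (ih a _ t this has' hst)
      | node hL' =>
        refine Emb.node (embL_trans_aux _ _ _ hL' hL ?_)
        intro t ht a' b' h1 h2
        have : sizeOf t ≤ n := by
          have := sizeOf_lt_of_mem (f := f) ht
          omega
        exact ih a' b' t this h1 h2

theorem gr_app_elim {f : F} {ts : List (Term F V)} (h : Gr (.app f ts : Term F V)) :
    ∀ t ∈ ts, Gr t := by cases h with | app hall => exact hall

theorem wf_app_elim {f : F} {ts : List (Term F V)} (h : WF arity (.app f ts : Term F V)) :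
    ts.length = arity f ∧ ∀ t ∈ ts, WF arity t := by
  cases h with | app _ _ h1 h2 => exact ⟨h1, h2⟩

end EmbSec

section EmbSucc

variable {arity : F → ℕ} {succ : Term F V → Term F V → Prop}

theorem succ_chain_lists
    (htrans : ∀ a b c : Term F V, Term.WF arity a → Term.WF arity b → Term.WF arity c →
        succ a b → succ b c → succ a c)
    (hstable : ∀ (f : F) (pre post : List (Term F V)) (a b : Term F V),
        Term.WF arity (Term.app f (pre ++ a :: post)) →
        Term.WF arity (Term.app f (pre ++ b :: post)) →
        succ a b → succ (Term.app f (pre ++ a :: post)) (Term.app f (pre ++ b :: post))) :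
    ∀ (ss ts : List (Term F V)), EmbL ss ts →
      (∀ t ∈ ts, ∀ s ∈ ss, Emb s t → succ t s ∨ s = t) →
      ∀ (f : F) (pre : List (Term F V)),
        WF arity (.app f (pre ++ ss)) → WF arity (.app f (pre ++ ts)) →
        succ (.app f (pre ++ ts)) (.app f (pre ++ ss)) ∨ ss = ts := by
  intro ss
  induction ss with
  | nil =>
    intro ts h _ f pre _ _
    cases h
    exact Or.inr rfl
  | cons s ss ihs =>
    intro ts h hpt f pre hwfC hwfA
    cases h with
    | cons hst hL =>
      rename_i t ts'
      obtain ⟨hlenA, hmemA⟩ := wf_app_elim hwfA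
      obtain ⟨hlenC, hmemC⟩ := wf_app_elim hwfC
      have hwfB : WF arity (.app f (pre ++ s :: ts') : Term F V) := by
        refine WF.app f _ (by simpa using hlenA) ?_
        intro u hu
        rcases List.mem_append.1 hu with hu | hu
        · exact hmemA u (List.mem_append_left _ hu)
        · rcases List.mem_cons.1 hu with rfl | hu
          · exact hmemC u (List.mem_append_right _ (List.mem_cons_self))
          · exact hmemA u (List.mem_append_right _ (List.mem_cons_of_mem _ hu))
      have hassoc : ∀ (l : List (Term F V)) (a : Term F V),
          (pre ++ [a]) ++ l = pre ++ a :: l := by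
        intro l a; simp
      have hrec := ihs ts' hL
        (fun u hu v hv hemb =>
          hpt u (List.mem_cons_of_mem _ hu) v (List.mem_cons_of_mem _ hv) hemb)
        f (pre ++ [s]) (by rw [hassoc]; exact hwfC) (by rw [hassoc]; exact hwfB)
      rw [hassoc, hassoc] at hrec
      rcases hpt t (List.mem_cons_self) s (List.mem_cons_self) hst with hts | rfl
      · have h1 : succ (.app f (pre ++ t :: ts')) (.app f (pre ++ s :: ts')) :=
          hstable f pre ts' t s hwfA hwfB hts
        rcases hrec with h2 | rfl
        · exact Or.inl (htrans _ _ _ hwfA hwfB hwfC h1 h2)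
        · exact Or.inl h1
      · rcases hrec with h2 | rfl
        · exact Or.inl h2
        · exact Or.inr rfl

theorem succ_of_emb
    (htrans : ∀ a b c : Term F V, Term.WF arity a → Term.WF arity b → Term.WF arity c →
        succ a b → succ b c → succ a c)
    (hstable : ∀ (f : F) (pre post : List (Term F V)) (a b : Term F V),
        Term.WF arity (Term.app f (pre ++ a :: post)) →
        Term.WF arity (Term.app f (pre ++ b :: post)) →
        succ a b → succ (Term.app f (pre ++ a :: post)) (Term.app f (pre ++ b :: post)))
    (hsubterm : ∀ (f : F) (pre post : List (Term F V)) (a : Term F V),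
        Term.WF arity (Term.app f (pre ++ a :: post)) →
        succ (Term.app f (pre ++ a :: post)) a) :
    ∀ (n : ℕ) (s t : Term F V), sizeOf t ≤ n → Gr s → Gr t → WF arity s → WF arity t →
      Emb s t → succ t s ∨ s = t := by
  intro n
  induction n with
  | zero => intro s t h; cases t <;> simp at h
  | succ n ih =>
    intro s t hsz hgs hgt hws hwt hemb
    cases hemb with
    | dive ht hst =>
      rename_i t' ts f
      have hszt' : sizeOf t' ≤ n := by
        have := sizeOf_lt_of_mem (f := f) ht
        omega
      have hgt' : Gr t' := gr_app_elim hgt t' ht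
      have hwt' : WF arity t' := (wf_app_elim hwt).2 t' ht
      obtain ⟨pre, post, hdec⟩ := List.append_of_mem ht
      have hsub : succ (.app f ts) t' := by
        rw [hdec]
        exact hsubterm f pre post t' (by rw [← hdec]; exact hwt)
      rcases ih s t' hszt' hgs hgt' hws hwt' hst with h1 | rfl
      · exact Or.inl (htrans _ _ _ hwt hwt' hws hsub h1)
      · exact Or.inl hsub
    | node hL =>
      rename_i f ss ts
      have hpt : ∀ u ∈ ts, ∀ v ∈ ss, Emb v u → succ u v ∨ v = u := by
        intro u hu v hv hemb'
        have hszu : sizeOf u ≤ n := by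
          have := sizeOf_lt_of_mem (f := f) hu
          omega
        exact ih v u hszu (gr_app_elim hgs v hv) (gr_app_elim hgt u hu)
          ((wf_app_elim hws).2 v hv) ((wf_app_elim hwt).2 u hu) hemb'
      have := succ_chain_lists htrans hstable ss ts hL hpt f []
        (by simpa using hws) (by simpa using hwt)
      simpa using this.imp_right (congrArg (Term.app f))

end EmbSucc

section KruskalSec

/-- Kruskal-type theorem: homeomorphic embedding is a partial well-order on
ground well-formed terms over a finite signature. -/
theorem kruskal [Finite F] (arity : F → ℕ) :
    {t : Term F V | Gr t ∧ WF arity t}.PartiallyWellOrderedOn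
      (Emb : Term F V → Term F V → Prop) := by
  classical
  rw [Set.PartiallyWellOrderedOn.iff_not_exists_isMinBadSeq sizeOf]
  rintro ⟨f, ⟨hmem, hpairs⟩, hmin⟩
  have hdec : ∀ n, ∃ (g : F) (ts : List (Term F V)), f n = .app g ts := by
    intro n
    have h1 := (hmem n).1
    cases hfe : f n with
    | var x => rw [hfe] at h1; cases h1
    | app g ts => exact ⟨g, ts, rfl⟩
  choose hd ch hfn using hdec
  have hchS : ∀ n, ∀ u ∈ ch n, Gr u ∧ WF arity u := by
    intro n u hu
    have h1 := (hmem n).1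
    have h2 := (hmem n).2
    rw [hfn n] at h1 h2
    exact ⟨gr_app_elim h1 u hu, (wf_app_elim h2).2 u hu⟩
  have hchsize : ∀ n, ∀ u ∈ ch n, sizeOf u < sizeOf (f n) := by
    intro n u hu
    rw [hfn n]
    exact sizeOf_lt_of_mem hu
  have hchemb : ∀ n, ∀ u ∈ ch n, Emb u (f n) := by
    intro n u hu
    rw [hfn n]
    exact Emb.dive hu (emb_refl u (hchS n u hu).1)
  -- the set of all children of terms of the minimal bad sequence is pwo
  have hCpwo : {u : Term F V | ∃ n, u ∈ ch n}.PartiallyWellOrderedOn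
      (Emb : Term F V → Term F V → Prop) := by
    rw [Set.PartiallyWellOrderedOn.iff_forall_not_isBadSeq]
    rintro g ⟨hgC, hgpairs⟩
    choose N hN using hgC
    have hkmem : sInf (Set.range N) ∈ Set.range N := Nat.sInf_mem (Set.range_nonempty N)
    set k := sInf (Set.range N) with hk
    obtain ⟨i0, hi0⟩ := hkmem
    have hkle : ∀ j, k ≤ N j := fun j => Nat.sInf_le ⟨j, rfl⟩
    refine hmin k (fun m => if m < k then f m else g (i0 + (m - k)))
      (fun m hm => (if_pos hm).symm) ?_ ⟨?_, ?_⟩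
    · rw [if_neg (lt_irrefl k), Nat.sub_self, Nat.add_zero, ← hi0]
      exact hchsize _ _ (hN i0)
    · intro m
      dsimp only
      by_cases hm : m < k
      · rw [if_pos hm]; exact hmem m
      · rw [if_neg hm]
        exact ⟨(hchS _ _ (hN _)).1, (hchS _ _ (hN _)).2⟩
    · intro m n hmn hembmn
      dsimp only at hembmn
      by_cases hn : n < k
      · rw [if_pos (hmn.trans hn), if_pos hn] at hembmn
        exact hpairs m n hmn hembmn
      · by_cases hm : m < k
        · rw [if_pos hm, if_neg hn] at hembmn
          have h2 : Emb (f m) (f (N (i0 + (n - k)))) :=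
            emb_trans _ _ _ _ le_rfl hembmn (hchemb _ _ (hN (i0 + (n - k))))
          exact hpairs m (N (i0 + (n - k))) (lt_of_lt_of_le hm (hkle _)) h2
        · rw [if_neg hm, if_neg hn] at hembmn
          exact hgpairs (i0 + (m - k)) (i0 + (n - k)) (by omega) hembmn
  -- pigeonhole on the head symbols
  obtain ⟨c, hcinf⟩ := Finite.exists_infinite_fiber hd
  have hinf : {n | hd n = c}.Infinite := by
    rw [← Set.infinite_coe_iff]
    have : hd ⁻¹' {c} = {n | hd n = c} := by ext n; simp
    rwa [this] at hcinf
  set e : ℕ → ℕ := Nat.nth (fun n => hd n = c) with he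
  have he_mem : ∀ k0, hd (e k0) = c := fun k0 => Nat.nth_mem_of_infinite hinf k0
  have he_lt : ∀ {a b : ℕ}, a < b → e a < e b := fun h => (Nat.nth_lt_nth hinf).2 h
  -- Higman's lemma on the lists of children
  set r' : Term F V → Term F V → Prop := fun a b => Emb a b ∨ a = b with hr'
  haveI : IsRefl (Term F V) r' := ⟨fun _ => Or.inr rfl⟩
  haveI : IsTrans (Term F V) r' := by
    constructor
    rintro a b c (h1 | rfl) (h2 | rfl)
    · exact Or.inl (emb_trans _ _ _ _ le_rfl h1 h2)
    · exact Or.inl h1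
    · exact Or.inl h2
    · exact Or.inr rfl
  haveI : IsPreorder (Term F V) r' := {}
  have hCpwo' : {u : Term F V | ∃ n, u ∈ ch n}.PartiallyWellOrderedOn r' := by
    intro q
    obtain ⟨m, n, hmn, h⟩ := hCpwo q
    exact ⟨m, n, hmn, Or.inl h⟩
  have hlists := Set.PartiallyWellOrderedOn.partiallyWellOrderedOn_sublistForall₂ r' hCpwo'
  obtain ⟨a, b, hab, hsub⟩ := hlists (fun k0 => ⟨ch (e k0), fun x hx => ⟨e k0, hx⟩⟩)
  have hlen : ∀ n, (ch n).length = arity (hd n) := by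
    intro n
    have h2 := (hmem n).2
    rw [hfn n] at h2
    exact (wf_app_elim h2).1
  obtain ⟨l', hf2, hsl⟩ := List.sublistForall₂_iff.1 hsub
  have hleq : l' = ch (e b) :=
    hsl.eq_of_length (by rw [← hf2.length_eq, hlen, hlen, he_mem, he_mem])
  subst hleq
  have hembL : ∀ (l1 l2 : List (Term F V)), List.Forall₂ r' l1 l2 →
      (∀ u ∈ l1, Gr u) → EmbL l1 l2 := by
    intro l1
    induction l1 with
    | nil => intro l2 h _; cases h; exact EmbL.nil
    | cons x l1 ih =>
      intro l2 h hg
      cases h with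
      | cons h1 h2 =>
        refine EmbL.cons ?_ (ih _ h2 fun u hu => hg u (List.mem_cons_of_mem _ hu))
        rcases h1 with h1 | rfl
        · exact h1
        · exact emb_refl x (hg x (List.mem_cons_self))
  refine hpairs (e a) (e b) (he_lt hab) ?_
  rw [hfn (e a), hfn (e b)]
  have hfab : hd (e a) = hd (e b) := by rw [he_mem a, he_mem b]
  rw [hfab]
  exact Emb.node (hembL _ _ hf2 fun u hu => (hchS (e a) u hu).1)

end KruskalSec

/-- if a simplification ordering orients all usable rules of `t`,
then every ground instance of `t` (with abstraction variables mapped to normal forms)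
innermost terminates. -/
theorem usable_simp_order_innermost_terminates {F V : Type*} [Finite F] (arity : F → ℕ)
    (R : List (Rule F V)) (hRS : IsRS R)
    (hRwf : ∀ ρ ∈ R, Term.WF arity ρ.lhs ∧ Term.WF arity ρ.rhs)
    (XA : Set V) (t : Term F V) (hwt : Term.WF arity t)
    -- a simplification ordering `succ` on the terms of the signature:
    (succ : Term F V → Term F V → Prop)
    (htrans : ∀ a b c : Term F V, Term.WF arity a → Term.WF arity b → Term.WF arity c →
        succ a b → succ b c → succ a c)
    (hirrefl : ∀ a : Term F V, Term.WF arity a → ¬ succ a a)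
    -- F-stability
    (hstable : ∀ (f : F) (pre post : List (Term F V)) (a b : Term F V),
        Term.WF arity (Term.app f (pre ++ a :: post)) →
        Term.WF arity (Term.app f (pre ++ b :: post)) →
        succ a b → succ (Term.app f (pre ++ a :: post)) (Term.app f (pre ++ b :: post)))
    -- subterm property
    (hsubterm : ∀ (f : F) (pre post : List (Term F V)) (a : Term F V),
        Term.WF arity (Term.app f (pre ++ a :: post)) →
        succ (Term.app f (pre ++ a :: post)) a)
    -- stability under substitution
    (hsubst : ∀ (σ : V → Term F V) (a b : Term F V), Term.WF arity a → Term.WF arity b →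
        (∀ x, Term.WF arity (σ x)) → succ a b → succ (subst σ a) (subst σ b))
    -- `succ` orients the usable rules of `t`
    (horient : ∀ ρ : Rule F V, Usable R XA t ρ → succ ρ.lhs ρ.rhs)
    (α : V → Term F V)
    (hg : ∀ x ∈ vars t, IsGround (α x))
    (hwα : ∀ x ∈ vars t, Term.WF arity (α x))
    (hnf : ∀ x ∈ vars t, x ∈ XA → NormalForm R (α x)) :
    InnTerminates R (subst α t) := by
  rintro ⟨f, h0, hstep⟩
  have step := step_main (arity := arity) (XA := XA) (t0 := t) hRS hRwf hstable hsubst horient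
  have key : ∀ n, Gr (f n) ∧ WF arity (f n) ∧ Good R XA t (f n) := by
    intro n
    induction n with
    | zero =>
      rw [h0]
      exact ⟨gr_subst t (fun x hx => gr_of_isGround (hg x hx)),
        wf_subst arity t hwt hwα,
        good_init hRS hnf t (fun x hx => hx) (fun ρ h => h)⟩
    | succ n ihn =>
      obtain ⟨p, hp, hip⟩ := hstep n
      exact (step p (f n) (f (n + 1)) ihn.1 ihn.2.1 ihn.2.2 hp hip).1
  have hdescent : ∀ n, succ (f n) (f (n + 1)) := by
    intro n
    obtain ⟨p, hp, hip⟩ := hstep n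
    exact (step p (f n) (f (n + 1)) (key n).1 (key n).2.1 (key n).2.2 hp hip).2
  have hlt : ∀ m n, m < n → succ (f m) (f n) := by
    intro m n h
    induction n with
    | zero => omega
    | succ n ihn =>
      rcases Nat.lt_succ_iff_lt_or_eq.1 h with h' | rfl
      · exact htrans _ _ _ (key m).2.1 (key n).2.1 (key (n + 1)).2.1 (ihn h') (hdescent n)
      · exact hdescent m
  obtain ⟨m, n, hmn, hemb⟩ := kruskal (V := V) arity (fun n => ⟨f n, (key n).1, (key n).2.1⟩)
  rcases succ_of_emb htrans hstable hsubterm (sizeOf (f n)) (f m) (f n) le_rfl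
      (key m).1 (key n).1 (key m).2.1 (key n).2.1 hemb with h | h
  · exact hirrefl (f m) (key m).2.1
      (htrans _ _ _ (key m).2.1 (key n).2.1 (key m).2.1 (hlt m n hmn) h)
  · exact hirrefl (f n) (key n).2.1 (h ▸ hlt m n hmn)

end TRS
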